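/- Let R = ℤ/4ℤ and let θ be the R-automorphism of R[x] defined by θ(x) = x + 1. Then the ring of invariants R[x]^⟨θ⟩ equals R[w², 2w], where w = x·(x + 1). -/

import Mathlib

open Polynomial

noncomputable section
namespace Z4Inv
abbrev R4 := ZMod 4
noncomputable def Wp : R4[X] := X * (X + 1)
noncomputable def A4 : Subalgebra R4 R4[X] := Algebra.adjoin R4 {Wp ^ 2, 2 * Wp}

instance : Nontrivial R4 := ⟨0, 1, by decide⟩

lemma h4 : (4 : R4[X]) = 0 := by
  rw [← map_ofNat (C : R4 →+* R4[X]) 4, show ((4:R4) = 0) from rfl, map_zero]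

lemma hX1 : (X + 1 : R4[X]) = X + C 1 := by rw [map_one]

lemma wmonic : Wp.Monic := by
  have := (monic_X (R := R4)).mul (monic_X_add_C (1 : R4))
  rw [← hX1] at this; exact this

lemma wdeg : Wp.natDegree = 2 := by
  have := (monic_X (R := R4)).natDegree_mul (monic_X_add_C (1 : R4))
  rw [← hX1, natDegree_X] at this
  rw [Wp, this, hX1, natDegree_X_add_C]

lemma w2monic : (Wp ^ 2).Monic := wmonic.pow 2
lemma w2deg : (Wp ^ 2).natDegree = 4 := by rw [wmonic.natDegree_pow, wdeg]

lemma w2inv : (Wp ^ 2).comp (X + 1) = Wp ^ 2 := by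
  simp only [Wp, pow_comp, mul_comp, add_comp, X_comp, one_comp]
  linear_combination (h4 : (4:R4[X]) = 0) * (X^3 + 3*X^2 + 3*X + 1)

lemma twinv : (2 * Wp).comp (X + 1) = 2 * Wp := by
  have h2 : ((2 : R4[X])).comp (X+1) = 2 := by
    rw [← map_ofNat (C : R4 →+* R4[X]) 2, C_comp]
  simp only [Wp, mul_comp, add_comp, X_comp, one_comp, h2]
  linear_combination (h4 : (4:R4[X]) = 0) * (X + 1)

lemma w2mem : (Wp ^ 2 : R4[X]) ∈ A4 := Algebra.subset_adjoin (by simp)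
lemma twmem : (2 * Wp : R4[X]) ∈ A4 := Algebra.subset_adjoin (by simp)

lemma rep3 (r : R4[X]) (h : r.natDegree ≤ 3) :
    r = C (r.coeff 3) * X ^ 3 + C (r.coeff 2) * X ^ 2 + C (r.coeff 1) * X + C (r.coeff 0) := by
  ext n
  rcases n with _ | _ | _ | _ | n
  · simp
  · simp [coeff_C]
  · simp [coeff_C, coeff_X_pow, coeff_X]
  · simp [coeff_C, coeff_X_pow, coeff_X]
  · rw [coeff_eq_zero_of_natDegree_lt (lt_of_le_of_lt h (by omega))]
    simp only [coeff_add, coeff_C_mul, coeff_X_pow, coeff_X, coeff_C]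
    norm_num
    rw [if_neg (by omega), if_neg (by omega)]
    simp

lemma base (r : R4[X]) (hd : r.natDegree ≤ 3) (hr : r.comp (X + 1) = r) : r ∈ A4 := by
  obtain ⟨a3, ha3⟩ : ∃ a, r.coeff 3 = a := ⟨_, rfl⟩
  obtain ⟨a2, ha2⟩ : ∃ a, r.coeff 2 = a := ⟨_, rfl⟩
  obtain ⟨a1, ha1⟩ : ∃ a, r.coeff 1 = a := ⟨_, rfl⟩
  obtain ⟨a0, ha0⟩ : ∃ a, r.coeff 0 = a := ⟨_, rfl⟩
  have hrep : r = C a3 * X ^ 3 + C a2 * X ^ 2 + C a1 * X + C a0 := by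
    rw [← ha3, ← ha2, ← ha1, ← ha0]; exact rep3 r hd
  rw [hrep] at hr ⊢
  clear hrep hd ha3 ha2 ha1 ha0
  simp only [add_comp, mul_comp, C_comp, X_comp, pow_comp] at hr
  have e1 : C a3 * (X+1)^3 + C a2 * (X+1)^2 + C a1 * (X+1) + C a0
      = C (a3) * X^3 + C (3*a3 + a2) * X^2 + C (3*a3 + 2*a2 + a1) * X + C (a3 + a2 + a1 + a0) := by
    push_cast [map_add, map_mul, map_ofNat]
    ring
  rw [e1] at hr
  have q2 : 3*a3 + a2 = a2 := by
    have := congrArg (fun p => coeff p 2) hr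
    simp only [coeff_add, coeff_C_mul, coeff_X_pow, coeff_X, coeff_C] at this
    norm_num at this
    linear_combination this
  have q1 : 3*a3 + 2*a2 + a1 = a1 := by
    have := congrArg (fun p => coeff p 1) hr
    simp only [coeff_add, coeff_C_mul, coeff_X_pow, coeff_X, coeff_C] at this
    norm_num at this
    linear_combination this
  have q0 : a3 + a2 + a1 + a0 = a0 := by
    have := congrArg (fun p => coeff p 0) hr
    simp only [coeff_add, coeff_C_mul, coeff_X_pow, coeff_X, coeff_C] at this
    norm_num at this
    linear_combination this
  have key : ∀ b3 b2 b1 : R4, 3*b3 + b2 = b2 → 3*b3 + 2*b2 + b1 = b1 →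
      b3 + b2 + b1 = 0 → b3 = 0 ∧ b1 = b2 ∧ (b2 = 0 ∨ b2 = 2) := by decide
  obtain ⟨h3, h1, h2⟩ := key a3 a2 a1 q2 q1 (by linear_combination q0)
  have hmemC : ∀ a : R4, (C a : R4[X]) ∈ A4 := fun a => by
    simpa using Subalgebra.algebraMap_mem A4 a
  rcases h2 with h2 | h2
  · have : C a3 * X ^ 3 + C a2 * X ^ 2 + C a1 * X + C a0 = C a0 := by
      rw [h3, h1, h2]; simp
    rw [this]; exact hmemC a0
  · have : C a3 * X ^ 3 + C a2 * X ^ 2 + C a1 * X + C a0 = C a0 + 2 * Wp := by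
      rw [h3, h1, h2, Wp]
      push_cast [map_ofNat]
      rw [map_zero]
      ring
    rw [this]
    exact add_mem (hmemC a0) twmem

lemma main : ∀ g : R4[X], g.comp (X + 1) = g → g ∈ A4 := by
  suffices H : ∀ n : ℕ, ∀ g : R4[X], g.natDegree = n → g.comp (X + 1) = g → g ∈ A4 by
    intro g hg; exact H g.natDegree g rfl hg
  intro n
  induction n using Nat.strong_induction_on with
  | _ n ih =>
    intro g hdeg hg
    by_cases hle : g.natDegree ≤ 3
    · exact base g hle hg
    push_neg at hle
    set q := g /ₘ (Wp ^ 2) with hq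
    set r := g %ₘ (Wp ^ 2) with hr
    have hgd : r + Wp ^ 2 * q = g := modByMonic_add_div g (Wp ^ 2)
    have hrdeg : r.natDegree ≤ 3 := by
      have := natDegree_modByMonic_lt g w2monic (by
        intro h1
        have := congrArg natDegree h1
        rw [w2deg, natDegree_one] at this
        omega)
      rw [w2deg, ← hr] at this
      omega
    have hginv := hg
    rw [← hgd, add_comp, mul_comp, w2inv] at hginv
    have hs : Wp ^ 2 * (q.comp (X+1) - q) = r - r.comp (X+1) := by linear_combination hginv
    have hX1deg : (X + 1 : R4[X]).natDegree = 1 := by rw [hX1, natDegree_X_add_C]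
    have hqinv : q.comp (X+1) = q := by
      by_contra hne
      have hne' : q.comp (X+1) - q ≠ 0 := sub_ne_zero.mpr hne
      have hL : (Wp^2 * (q.comp (X+1) - q)).natDegree = 4 + (q.comp (X+1) - q).natDegree := by
        rw [w2monic.natDegree_mul' hne', w2deg]
      have hcr : (r.comp (X+1)).natDegree ≤ 3 := by
        have h1 := natDegree_comp_le (p := r) (q := X + 1)
        rw [hX1deg, mul_one] at h1
        omega
      have hR : (r - r.comp (X+1)).natDegree ≤ 3 := by
        refine le_trans (natDegree_sub_le _ _) ?_
        exact max_le hrdeg hcr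
      rw [hs] at hL
      omega
    have hrinv : r.comp (X+1) = r := by
      have h0 : r - r.comp (X+1) = 0 := by rw [← hs, hqinv]; ring
      have := sub_eq_zero.mp h0
      exact this.symm
    have hqdeg : q.natDegree = g.natDegree - 4 := by
      rw [hq, natDegree_divByMonic g w2monic, w2deg]
    have hqA := ih q.natDegree (by omega) q rfl hqinv
    rw [← hgd]
    exact add_mem (base r hrdeg hrinv) (mul_mem w2mem hqA)

lemma aeval_comp (p : R4[X]) : (aeval (X + 1 : R4[X])) p = p.comp (X + 1) := by
  rw [aeval_def, algebraMap_eq]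
  rfl

end Z4Inv
open Z4Inv


/-- Theorem: over `R = ℤ/4ℤ`, for `θ(x) = x + 1` the ring of invariants of `⟨θ⟩`
is `R[w², 2w]` where `w = x·(x+1)`. -/
theorem zmod4_translation_invariants
    (θ : (ZMod 4)[X] ≃ₐ[ZMod 4] (ZMod 4)[X]) (hθ : θ X = X + 1) :
    {g : (ZMod 4)[X] | ∀ σ ∈ Subgroup.zpowers θ, σ g = g} =
      (Algebra.adjoin (ZMod 4)
        ({(X * (X + 1)) ^ 2, 2 * (X * (X + 1))} : Set ((ZMod 4)[X])) : Set ((ZMod 4)[X])) := by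
  have hA : (Algebra.adjoin (ZMod 4)
      ({(X * (X + 1)) ^ 2, 2 * (X * (X + 1))} : Set ((ZMod 4)[X]))) = A4 := rfl
  have hθa : ∀ p : (ZMod 4)[X], θ p = p.comp (X + 1) := by
    have h1 : (θ : (ZMod 4)[X] →ₐ[ZMod 4] (ZMod 4)[X]) = aeval (X + 1) :=
      Polynomial.algHom_ext (by simpa using hθ)
    intro p
    have := AlgHom.congr_fun h1 p
    simpa [aeval_comp] using this
  ext g
  simp only [Set.mem_setOf_eq, SetLike.mem_coe, hA]
  constructor
  · intro h
    exact main g (by rw [← hθa]; exact h θ (Subgroup.mem_zpowers θ))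
  · intro hgA σ hσ
    have hfix : θ g = g := by
      have hle : A4 ≤ AlgHom.equalizer (θ : (ZMod 4)[X] →ₐ[ZMod 4] (ZMod 4)[X])
          (AlgHom.id (ZMod 4) ((ZMod 4)[X])) := by
        apply Algebra.adjoin_le
        rintro p (rfl | rfl)
        · show θ _ = _
          rw [hθa]; exact w2inv
        · show θ _ = _
          rw [hθa]; exact twinv
      exact hle hgA
    have hst : θ ∈ MulAction.stabilizer ((ZMod 4)[X] ≃ₐ[ZMod 4] (ZMod 4)[X]) g := by
      rw [MulAction.mem_stabilizer_iff]; exact hfix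
    have hzp : Subgroup.zpowers θ ≤ MulAction.stabilizer _ g := Subgroup.zpowers_le.mpr hst
    exact hzp hσ
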